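/- Let p and e be primes such that the multiplicative order of p modulo e equals e−1, let k be a positive integer, d = k(e−1), q = p^d, F = GF(q), and let ω be a generator of the cyclic group F*. Let C = ⟨ω^e⟩ be the subgroup of e-th powers in F*. Let G₀ ≤ Sym(F) be the subgroup generated by the map x ↦ ω^e·x and the Frobenius map x ↦ x^p. Then |G₀| = k(e−1)(q−1)/e, and G₀ has exactly two orbits on F ∖ {0}, namely C (of size (q−1)/e) and (F ∖ {0}) ∖ C (of size (e−1)(q−1)/e). -/

import Mathlib

/-- The Frobenius map `x ↦ x^p` as a permutation of a finite field of characteristic `p`. -/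
noncomputable def frobPerm (F : Type*) [Field F] [Finite F] (p : ℕ) [Fact p.Prime]
    [CharP F p] : Equiv.Perm F :=
  Equiv.ofBijective (fun x => x ^ p)
    (Finite.injective_iff_bijective.mp (fun a b h => frobenius_inj F p (by simpa [frobenius_def] using h)))

/-- Multiplication by a fixed unit as a permutation of a field. -/
noncomputable def mulPerm {F : Type*} [Field F] (u : Fˣ) : Equiv.Perm F :=
  Equiv.mulLeft₀ (u : F) (Units.ne_zero u)


section VLS
variable {F : Type*} [Field F] [Fintype F] (p : ℕ) [Fact p.Prime] [CharP F p]

lemma frobPerm_apply (x : F) : frobPerm F p x = x ^ p := rfl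

lemma mulPerm_apply (u : Fˣ) (x : F) : mulPerm u x = u * x := rfl

lemma frobPerm_pow_apply (j : ℕ) (x : F) : (frobPerm F p ^ j) x = x ^ (p ^ j) := by
  induction j generalizing x with
  | zero => simp
  | succ n ih =>
    rw [pow_succ, Equiv.Perm.mul_apply, frobPerm_apply, ih, ← pow_mul, pow_succ']

lemma mulPerm_mul (u v : Fˣ) : mulPerm (u * v) = mulPerm u * mulPerm v := by
  ext x; simp [mulPerm_apply, mul_assoc]

lemma mulPerm_one : mulPerm (1 : Fˣ) = 1 := by
  ext x; simp [mulPerm_apply]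

noncomputable def mulPermHom : Fˣ →* Equiv.Perm F := MonoidHom.mk' mulPerm mulPerm_mul

lemma frobPerm_pow_mul_mulPerm (j : ℕ) (u : Fˣ) :
    frobPerm F p ^ j * mulPerm u = mulPerm (u ^ (p ^ j)) * frobPerm F p ^ j := by
  ext x
  simp [Equiv.Perm.mul_apply, frobPerm_pow_apply, mulPerm_apply, mul_pow]

end VLS

section Order
variable {F : Type*} [Field F] [Fintype F] {p : ℕ} [Fact p.Prime] [CharP F p]

lemma orderOf_frobPerm {d q : ℕ} (hd : 0 < d) (hq : q = p ^ d)
    (hF : Fintype.card F = q) (ω : Fˣ) (hω : ∀ x : Fˣ, x ∈ Subgroup.zpowers ω) :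
    orderOf (frobPerm F p) = d := by
  have hp1 : 1 < p := (Fact.out : p.Prime).one_lt
  have hq1 : 1 < q := by
    rw [hq]; calc 1 < p := hp1
    _ ≤ p ^ d := Nat.le_self_pow hd.ne' p
  have hωord : orderOf ω = q - 1 := by
    rw [orderOf_eq_card_of_forall_mem_zpowers hω, Nat.card_units,
      Nat.card_eq_fintype_card, hF]
  have hfd : frobPerm F p ^ d = 1 := by
    ext x
    rw [frobPerm_pow_apply, ← hq, ← hF, FiniteField.pow_card, Equiv.Perm.one_apply]
  have hdvd : orderOf (frobPerm F p) ∣ d := orderOf_dvd_of_pow_eq_one hfd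
  have hpos : 0 < orderOf (frobPerm F p) := by
    apply orderOf_pos
  refine le_antisymm (Nat.le_of_dvd hd hdvd) ?_
  set m := orderOf (frobPerm F p) with hm
  have h1 : (frobPerm F p ^ m) (ω : F) = (ω : F) := by
    rw [pow_orderOf_eq_one, Equiv.Perm.one_apply]
  rw [frobPerm_pow_apply] at h1
  have h2 : (ω ^ (p ^ m) : Fˣ) = ω := by
    ext; push_cast; exact h1
  have h3 : q - 1 ∣ p ^ m - 1 := by
    rw [← hωord]
    apply orderOf_dvd_of_pow_eq_one
    have h2' : ω ^ (p ^ m - 1) * ω = 1 * ω := by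
      rw [one_mul, ← pow_succ, Nat.sub_add_cancel (Nat.one_le_pow _ _ (by omega)), h2]
    exact mul_right_cancel h2'
  have h4 : q - 1 ≤ p ^ m - 1 := Nat.le_of_dvd (by
    have : 1 < p ^ m := by
      calc 1 < p := hp1
      _ ≤ p ^ m := Nat.le_self_pow hpos.ne' p
    omega) h3
  have h5 : p ^ d ≤ p ^ m := by omega
  exact (Nat.pow_le_pow_iff_right hp1).mp h5

end Order

section Closure
variable {F : Type*} [Field F] [Fintype F] {p : ℕ} [Fact p.Prime] [CharP F p]

lemma mem_closure_iff' (u : Fˣ) (g : Equiv.Perm F) :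
    g ∈ Subgroup.closure {mulPerm u, frobPerm F p} ↔
      ∃ c ∈ Subgroup.zpowers u, ∃ j : ℕ, g = mulPerm c * frobPerm F p ^ j := by
  set f := frobPerm F p with hf
  constructor
  · intro hg
    induction hg using Subgroup.closure_induction with
    | mem x hx =>
      rw [Set.mem_insert_iff, Set.mem_singleton_iff] at hx
      rcases hx with h | h
      · exact ⟨u, Subgroup.mem_zpowers u, 0, by simp [h]⟩
      · exact ⟨1, one_mem _, 1, by simp [h, mulPerm_one]⟩
    | one => exact ⟨1, one_mem _, 0, by simp [mulPerm_one]⟩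
    | mul x y hx hy ihx ihy =>
      obtain ⟨c₁, hc₁, j₁, rfl⟩ := ihx
      obtain ⟨c₂, hc₂, j₂, rfl⟩ := ihy
      refine ⟨c₁ * c₂ ^ (p ^ j₁), mul_mem hc₁ (pow_mem hc₂ _), j₁ + j₂, ?_⟩
      rw [mulPerm_mul, mul_assoc, ← mul_assoc (f ^ j₁), frobPerm_pow_mul_mulPerm,
        mul_assoc, ← pow_add, mul_assoc]
    | inv x hx ihx =>
      obtain ⟨c, hc, j, rfl⟩ := ihx
      have hDpos : 0 < orderOf f := orderOf_pos f
      refine ⟨(c ^ (p ^ (j * (orderOf f - 1))))⁻¹, inv_mem (pow_mem hc _),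
        j * (orderOf f - 1), ?_⟩
      apply inv_eq_of_mul_eq_one_left
      rw [mul_assoc, ← mul_assoc (f ^ (j * (orderOf f - 1))), frobPerm_pow_mul_mulPerm,
        mul_assoc, ← pow_add, ← mul_assoc, ← mulPerm_mul, inv_mul_cancel, mulPerm_one,
        one_mul]
      have h1 : orderOf f - 1 + 1 = orderOf f := Nat.succ_pred_eq_of_pos hDpos
      have h2 : j * (orderOf f - 1) + j = orderOf f * j := by
        conv_rhs => rw [← h1]
        ring
      rw [h2, pow_mul, pow_orderOf_eq_one, one_pow]
  · rintro ⟨c, hc, j, rfl⟩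
    have hu : mulPerm u ∈ Subgroup.closure {mulPerm u, f} :=
      Subgroup.subset_closure (Set.mem_insert _ _)
    have hff : f ∈ Subgroup.closure {mulPerm u, f} :=
      Subgroup.subset_closure (Set.mem_insert_of_mem _ rfl)
    obtain ⟨m, rfl⟩ := hc
    have : mulPerm (u ^ m) = (mulPerm u) ^ m := by
      rw [show mulPerm (F := F) = mulPermHom from rfl, map_zpow]
    rw [this]
    exact mul_mem (zpow_mem hu m) (pow_mem hff j)

end Closure

section Aux

lemma mem_zpowers_epow_iff {G : Type*} [Group G] (ω : G) (hω : ∀ x : G, x ∈ Subgroup.zpowers ω)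
    (e n : ℕ) (hn : orderOf ω = e * n) (hnpos : 0 < n) (u : G) :
    u ∈ Subgroup.zpowers (ω ^ e) ↔ u ^ n = 1 := by
  constructor
  · rintro ⟨m, rfl⟩
    have : ((ω ^ e) ^ m) ^ (n : ℤ) = ((ω ^ (e * n)) ^ m : G) := by
      rw [← zpow_natCast ω (e * n)]
      rw [← zpow_natCast ω e, ← zpow_mul, ← zpow_mul, ← zpow_mul]
      congr 1
      push_cast
      ring
    rw [← zpow_natCast ((ω ^ e) ^ m) n, this, ← hn, pow_orderOf_eq_one, one_zpow]
  · intro hu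
    obtain ⟨t, rfl⟩ := hω u
    have h1 : (ω ^ t) ^ (n : ℤ) = 1 := by rw [zpow_natCast]; exact hu
    rw [← zpow_mul] at h1
    have h2 : (orderOf ω : ℤ) ∣ t * n := orderOf_dvd_iff_zpow_eq_one.mpr h1
    rw [hn] at h2
    obtain ⟨s, hs⟩ := h2
    have hne : (n : ℤ) ≠ 0 := by exact_mod_cast hnpos.ne'
    have h3 : t = e * s := by
      have : t * n = (e * s) * n := by push_cast at hs ⊢; linarith [hs]
      exact mul_right_cancel₀ hne this
    exact ⟨s, by show (ω ^ e) ^ s = ω ^ t; rw [← zpow_natCast ω e, ← zpow_mul, ← h3]⟩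

lemma exists_pow_p_mod {p e : ℕ} (hp : p.Prime) (he : e.Prime)
    (hord : orderOf (p : ZMod e) = e - 1) (t : ℤ) (ht : ¬ ((e : ℤ) ∣ t)) :
    ∃ j : ℕ, (e : ℤ) ∣ t - (p : ℤ) ^ j := by
  haveI : Fact e.Prime := ⟨he⟩
  have he1 : 1 < e := he.one_lt
  have hp0 : (p : ZMod e) ≠ 0 := by
    intro h
    have : (p : ZMod e) ^ (e - 1) = 1 := hord ▸ pow_orderOf_eq_one _
    rw [h, zero_pow (by omega)] at this
    exact zero_ne_one this
  have ht0 : (t : ZMod e) ≠ 0 := fun h => ht ((ZMod.intCast_zmod_eq_zero_iff_dvd t e).mp h)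
  set pu : (ZMod e)ˣ := Units.mk0 _ hp0 with hpu
  set tu : (ZMod e)ˣ := Units.mk0 _ ht0 with htu
  have hpuord : orderOf pu = e - 1 := by rw [← orderOf_units]; exact hord
  have hcard : Nat.card (ZMod e)ˣ = e - 1 := by
    rw [Nat.card_eq_fintype_card, ZMod.card_units_eq_totient, Nat.totient_prime he]
  have htop : Subgroup.zpowers pu = ⊤ := by
    rw [← Subgroup.card_eq_iff_eq_top, Nat.card_zpowers, hpuord, hcard]
  have : tu ∈ Subgroup.zpowers pu := htop ▸ Subgroup.mem_top tu
  obtain ⟨m, hm⟩ := this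
  have hmod : 0 ≤ m % (orderOf pu : ℤ) :=
    Int.emod_nonneg m (by simp [hpuord]; omega)
  refine ⟨(m % (orderOf pu : ℤ)).toNat, ?_⟩
  have hj : pu ^ ((m % (orderOf pu : ℤ)).toNat) = tu := by
    rw [← zpow_natCast, Int.toNat_of_nonneg hmod, zpow_mod_orderOf]; exact hm
  have hj2 : (p : ZMod e) ^ ((m % (orderOf pu : ℤ)).toNat) = (t : ZMod e) := by
    have := congrArg Units.val hj
    simpa [hpu, htu] using this
  rw [← ZMod.intCast_zmod_eq_zero_iff_dvd]
  push_cast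
  rw [hj2, sub_self]

end Aux

/-- Van Lint–Schrijver situation. Let `p, e` be primes with
`ord_e(p) = e - 1`, `q = p^(k(e-1))`, `F = GF(q)`, `ω` a generator of `Fˣ`, and
`C = ⟨ω^e⟩ ≤ Fˣ`. The group `G₀ ≤ Sym(F)` generated by `x ↦ ω^e · x` and the Frobenius
`x ↦ x^p` has order `k(e-1)(q-1)/e` and exactly two orbits on `F \ {0}`, namely `C`
(of size `(q-1)/e`) and its complement (of size `(e-1)(q-1)/e`). -/
theorem vanLintSchrijver_group_orbits
    (p e k d q : ℕ) [Fact p.Prime] (he : e.Prime)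
    (hord : orderOf (p : ZMod e) = e - 1)
    (hk : 0 < k) (hd : d = k * (e - 1)) (hq : q = p ^ d)
    (F : Type*) [Field F] [Fintype F] [CharP F p] (hF : Fintype.card F = q)
    (ω : Fˣ) (hω : ∀ x : Fˣ, x ∈ Subgroup.zpowers ω)
    (G₀ : Subgroup (Equiv.Perm F))
    (hG₀ : G₀ = Subgroup.closure {mulPerm (ω ^ e), frobPerm F p})
    (C : Set F) (hC : C = {x : F | ∃ c : Fˣ, c ∈ Subgroup.zpowers (ω ^ e) ∧ x = (c : F)}) :
    Nat.card G₀ = k * (e - 1) * (q - 1) / e ∧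
    MulAction.orbit G₀ ((ω : F) ^ e) = C ∧
    MulAction.orbit G₀ (ω : F) = {x : F | x ≠ 0} \ C ∧
    (∀ x : F, x ≠ 0 → MulAction.orbit G₀ x = C ∨ MulAction.orbit G₀ x = {x : F | x ≠ 0} \ C) ∧
    C.ncard = (q - 1) / e ∧
    ({x : F | x ≠ 0} \ C).ncard = (e - 1) * (q - 1) / e := by
  have hp1 : 1 < p := (Fact.out : p.Prime).one_lt
  have he1 : 1 < e := he.one_lt
  haveI : NeZero e := ⟨by omega⟩
  haveI : Fact (1 < e) := ⟨he.one_lt⟩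
  have hdpos : 0 < d := by rw [hd]; exact Nat.mul_pos hk (by omega)
  have hq1 : 1 < q := by
    rw [hq]; calc 1 < p := hp1
    _ ≤ p ^ d := Nat.le_self_pow hdpos.ne' p
  have hωord : orderOf ω = q - 1 := by
    rw [orderOf_eq_card_of_forall_mem_zpowers hω, Nat.card_units,
      Nat.card_eq_fintype_card, hF]
  have hed : e ∣ q - 1 := by
    have h0 : orderOf (p : ZMod e) ∣ d := by rw [hord, hd]; exact dvd_mul_left _ _
    have h1 : (p : ZMod e) ^ d = 1 := orderOf_dvd_iff_pow_eq_one.mp h0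
    have h2 : ((q - 1 : ℕ) : ZMod e) = 0 := by
      have h3 : ((q : ℕ) : ZMod e) = 1 := by rw [hq]; push_cast; exact h1
      rw [Nat.cast_sub (by omega), h3, Nat.cast_one, sub_self]
    exact (ZMod.natCast_eq_zero_iff _ _).mp h2
  set n := (q - 1) / e with hn
  have hqen : q - 1 = e * n := (Nat.mul_div_cancel' hed).symm
  have hnpos : 0 < n := Nat.div_pos (Nat.le_of_dvd (by omega) hed) (by omega)
  have horderωe : orderOf (ω ^ e) = n := by
    rw [orderOf_pow, hωord, hqen, Nat.gcd_eq_right ⟨n, rfl⟩, Nat.mul_div_cancel_left _ (by omega)]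
  have hmemC : ∀ u : Fˣ, (u ∈ Subgroup.zpowers (ω ^ e) ↔ u ^ n = 1) :=
    mem_zpowers_epow_iff ω hω e n (by rw [hωord, hqen]) hnpos
  have hpne : ¬ e ∣ p := by
    intro hdv
    have h0 : (p : ZMod e) = 0 := (ZMod.natCast_eq_zero_iff p e).mpr hdv
    have h1 : (p : ZMod e) ^ (e - 1) = 1 := hord ▸ pow_orderOf_eq_one _
    rw [h0, zero_pow (by omega)] at h1
    exact zero_ne_one h1
  have hford : orderOf (frobPerm F p) = d := orderOf_frobPerm hdpos hq hF ω hω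
  have hG₀mem : ∀ g, g ∈ G₀ ↔
      ∃ c ∈ Subgroup.zpowers (ω ^ e), ∃ j : ℕ, g = mulPerm c * frobPerm F p ^ j := by
    intro g; rw [hG₀]; exact mem_closure_iff' (ω ^ e) g
  have hmulmem : ∀ c : Fˣ, c ∈ Subgroup.zpowers (ω ^ e) → ∀ j : ℕ,
      mulPerm c * frobPerm F p ^ j ∈ G₀ :=
    fun c hc j => (hG₀mem _).mpr ⟨c, hc, j, rfl⟩
  have hsmul : ∀ (g : G₀) (x : F), g • x = (g : Equiv.Perm F) x := fun _ _ => rfl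
  -- Cardinality of G₀
  have hcardG : Nat.card G₀ = n * d := by
    haveI : NeZero d := ⟨hdpos.ne'⟩
    have hb : Function.Bijective
        (fun cj : (Subgroup.zpowers (ω ^ e)) × ZMod d =>
          (⟨mulPerm cj.1 * frobPerm F p ^ (cj.2.val),
            hmulmem cj.1 cj.1.2 cj.2.val⟩ : G₀)) := by
      constructor
      · rintro ⟨c₁, j₁⟩ ⟨c₂, j₂⟩ hh
        simp only [Subtype.mk.injEq] at hh
        have h1 := congrArg (fun g : Equiv.Perm F => g (1 : F)) hh
        simp only [Equiv.Perm.mul_apply, frobPerm_pow_apply, one_pow, mulPerm_apply,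
          mul_one] at h1
        have hc : (c₁ : Fˣ) = c₂ := Units.ext h1
        have hf2 : frobPerm F p ^ j₁.val = frobPerm F p ^ j₂.val := by
          have := hh
          rw [hc] at this
          exact mul_left_cancel this
        have hmod := pow_eq_pow_iff_modEq.mp hf2
        rw [hford] at hmod
        have hj : j₁ = j₂ := by
          have hlt1 : j₁.val < d := ZMod.val_lt j₁
          have hlt2 : j₂.val < d := ZMod.val_lt j₂
          have h3 : j₁.val % d = j₂.val % d := hmod
          rw [Nat.mod_eq_of_lt hlt1, Nat.mod_eq_of_lt hlt2] at h3
          exact ZMod.val_injective _ h3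
        simp [Prod.ext_iff, Subtype.ext_iff, hc, hj]
      · rintro ⟨g, hg⟩
        obtain ⟨c, hc, j, rfl⟩ := (hG₀mem g).mp hg
        refine ⟨⟨⟨c, hc⟩, (j : ZMod d)⟩, ?_⟩
        have hjj : frobPerm F p ^ ((j : ZMod d).val) = frobPerm F p ^ j := by
          rw [ZMod.val_natCast, ← hford]
          exact pow_mod_orderOf _ _
        refine Subtype.ext ?_
        show mulPerm c * frobPerm F p ^ ((j : ZMod d)).val = mulPerm c * frobPerm F p ^ j
        rw [hjj]
    rw [← Nat.card_eq_of_bijective _ hb, Nat.card_prod, Nat.card_zpowers, horderωe,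
      Nat.card_zmod]
  have hcard1 : Nat.card G₀ = k * (e - 1) * (q - 1) / e := by
    rw [hcardG, ← hd, hqen, show d * (e * n) = e * (n * d) by ring,
      Nat.mul_div_cancel_left _ (by omega)]
  have happly : ∀ (c : Fˣ) (j : ℕ) (u : Fˣ),
      (mulPerm c * frobPerm F p ^ j) ((u : F)) = ((c * u ^ (p ^ j) : Fˣ) : F) := by
    intro c j u
    rw [Equiv.Perm.mul_apply, frobPerm_pow_apply, mulPerm_apply]
    push_cast
    ring
  have hωe : ((ω ^ e : Fˣ) : F) = (ω : F) ^ e := by push_cast; ring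
  -- first orbit
  have horb1 : MulAction.orbit G₀ ((ω : F) ^ e) = C := by
    ext x
    rw [MulAction.mem_orbit_iff]
    constructor
    · rintro ⟨⟨g, hg⟩, hgx⟩
      obtain ⟨c, hc, j, rfl⟩ := (hG₀mem g).mp hg
      rw [hsmul] at hgx
      rw [hC]
      refine ⟨c * (ω ^ e) ^ (p ^ j), mul_mem hc (pow_mem (Subgroup.mem_zpowers _) _), ?_⟩
      rw [← hgx]
      show (mulPerm c * frobPerm F p ^ j) ((ω : F) ^ e) = _
      rw [← hωe, happly]
    · intro hx
      rw [hC] at hx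
      obtain ⟨c, hc, rfl⟩ := hx
      refine ⟨⟨mulPerm (c * (ω ^ e)⁻¹) * frobPerm F p ^ 0,
        hmulmem _ (mul_mem hc (inv_mem (Subgroup.mem_zpowers _))) 0⟩, ?_⟩
      rw [hsmul]
      show (mulPerm (c * (ω ^ e)⁻¹) * frobPerm F p ^ 0) ((ω : F) ^ e) = _
      rw [← hωe, happly]
      congr 1
      rw [pow_zero, pow_one, inv_mul_cancel_right]
  -- second orbit
  have horb2 : MulAction.orbit G₀ (ω : F) = {x : F | x ≠ 0} \ C := by
    ext x
    rw [MulAction.mem_orbit_iff]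
    constructor
    · rintro ⟨⟨g, hg⟩, hgx⟩
      obtain ⟨c, hc, j, rfl⟩ := (hG₀mem g).mp hg
      rw [hsmul] at hgx
      replace hgx : ((c * ω ^ (p ^ j) : Fˣ) : F) = x := by rw [← happly]; exact hgx
      refine ⟨?_, ?_⟩
      · show x ≠ 0
        rw [← hgx]
        exact Units.ne_zero _
      · intro hxC
        rw [hC] at hxC
        obtain ⟨c', hc', hx'⟩ := hxC
        have hcu : c * ω ^ (p ^ j) = c' := Units.ext (by rw [hgx, hx'])
        have hωmem : ω ^ (p ^ j) ∈ Subgroup.zpowers (ω ^ e) := by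
          have h5 : ω ^ (p ^ j) = c⁻¹ * c' := eq_inv_mul_iff_mul_eq.mpr hcu
          rw [h5]
          exact mul_mem (inv_mem hc) hc'
        have h1 : (ω ^ (p ^ j)) ^ n = 1 := (hmemC _).mp hωmem
        rw [← pow_mul] at h1
        have h2 : orderOf ω ∣ p ^ j * n := orderOf_dvd_of_pow_eq_one h1
        rw [hωord, hqen] at h2
        have h3 : e ∣ p ^ j := (mul_dvd_mul_iff_right hnpos.ne').mp h2
        exact hpne (he.dvd_of_dvd_pow h3)
    · rintro ⟨hx0, hxC⟩
      have hx0' : x ≠ 0 := hx0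
      set u : Fˣ := Units.mk0 x hx0' with hu
      obtain ⟨t, htu⟩ := hω u
      have htu : ω ^ t = u := htu
      have het : ¬ ((e : ℤ) ∣ t) := by
        rintro ⟨s, hs⟩
        apply hxC
        rw [hC]
        refine ⟨u, ⟨s, ?_⟩, by simp [hu]⟩
        show (ω ^ e) ^ s = u
        rw [← zpow_natCast ω e, ← zpow_mul, ← hs]
        exact htu
      obtain ⟨j, hj⟩ := exists_pow_p_mod (Fact.out) he hord t het
      obtain ⟨s, hs⟩ := hj
      have hcmem : ω ^ (t - (p : ℤ) ^ j) ∈ Subgroup.zpowers (ω ^ e) := by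
        refine ⟨s, ?_⟩
        show (ω ^ e) ^ s = ω ^ (t - (p : ℤ) ^ j)
        rw [← zpow_natCast ω e, ← zpow_mul, ← hs]
      refine ⟨⟨mulPerm (ω ^ (t - (p : ℤ) ^ j)) * frobPerm F p ^ j, hmulmem _ hcmem j⟩, ?_⟩
      rw [hsmul]
      show (mulPerm (ω ^ (t - (p : ℤ) ^ j)) * frobPerm F p ^ j) ((ω : Fˣ) : F) = x
      rw [happly]
      have h6 : (ω ^ (t - (p : ℤ) ^ j)) * ω ^ (p ^ j : ℕ) = u := by
        rw [← zpow_natCast ω (p ^ j : ℕ), ← zpow_add]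
        push_cast
        rw [sub_add_cancel]
        exact htu
      rw [h6]
      simp [hu]
  -- all orbits
  have horb3 : ∀ x : F, x ≠ 0 →
      MulAction.orbit G₀ x = C ∨ MulAction.orbit G₀ x = {x : F | x ≠ 0} \ C := by
    intro x hx
    by_cases hxC : x ∈ C
    · left
      have hxo : x ∈ MulAction.orbit G₀ ((ω : F) ^ e) := horb1.symm ▸ hxC
      exact (MulAction.orbit_eq_iff.mpr hxo).trans horb1
    · right
      have hxo : x ∈ MulAction.orbit G₀ (ω : F) := by
        rw [horb2]; exact ⟨hx, hxC⟩
      exact (MulAction.orbit_eq_iff.mpr hxo).trans horb2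
  -- cardinalities
  have hCcard : C.ncard = n := by
    have hCim : C = Units.val '' ((Subgroup.zpowers (ω ^ e) : Subgroup Fˣ) : Set Fˣ) := by
      rw [hC]
      ext x
      simp only [Set.mem_setOf_eq, Set.mem_image, SetLike.mem_coe]
      constructor
      · rintro ⟨c, hc, rfl⟩; exact ⟨c, hc, rfl⟩
      · rintro ⟨c, hc, rfl⟩; exact ⟨c, hc, rfl⟩
    rw [hCim, Set.ncard_image_of_injective _ Units.val_injective, ← horderωe, ← Nat.card_zpowers]
    rw [← Nat.card_coe_set_eq]
    rfl
  have hC0 : C ⊆ {x : F | x ≠ 0} := by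
    rw [hC]
    rintro x ⟨c, _, rfl⟩
    exact Units.ne_zero c
  have hne0card : ({x : F | x ≠ 0}).ncard = q - 1 := by
    have hh : {x : F | x ≠ 0} = ({0}ᶜ : Set F) := by ext; simp
    have h7 := Set.ncard_add_ncard_compl ({0} : Set F)
    rw [Set.ncard_singleton, Nat.card_eq_fintype_card, hF] at h7
    rw [hh]
    omega
  have hdiffcard : ({x : F | x ≠ 0} \ C).ncard = (e - 1) * (q - 1) / e := by
    rw [Set.ncard_diff hC0, hne0card, hCcard, hqen,
      show (e - 1) * (e * n) = e * ((e - 1) * n) by ring,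
      Nat.mul_div_cancel_left _ (by omega : 0 < e), Nat.sub_mul, one_mul]
  exact ⟨hcard1, horb1, horb2, horb3, by rw [hCcard], hdiffcard⟩
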